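/- δ₀ m n equals the minimum, over all subsequences e' of e and all alignments γ of e' and f, of the cost of γ, and this minimum is attained: some subsequence e' of e and alignment γ of e' and f have cost exactly δ₀ m n, and no subsequence e' of e admits an alignment with f of cost strictly smaller than δ₀ m n. (This is the lower bound, over all realizations of a sequential uncertain trace, of the optimal alignment cost, corresponding to zero removal cost and no confidence penalties.) -/

import Mathlib

open scoped NNReal

namespace Stmt2

variable {E F : Type*}

/-- The log projection of a list of moves: first components that are not `none`. -/
def logProj (γ : List (Option E × Option F)) : List E := γ.filterMap Prod.fst

/-- The model projection of a list of moves: second components that are not `none`. -/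
def modelProj (γ : List (Option E × Option F)) : List F := γ.filterMap Prod.snd

/-- `γ` is an alignment of `e` and `f`: a list of moves (no `(none, none)` pairs)
whose log projection is `e` and whose model projection is `f`. -/
def IsAlignment (e : List E) (f : List F) (γ : List (Option E × Option F)) : Prop :=
  (∀ mv ∈ γ, mv ≠ (none, none)) ∧ logProj γ = e ∧ modelProj γ = f

/-- Cost of a single move. -/
def moveCost (PL : E → ℝ≥0) (PM : F → ℝ≥0) (Peq : E → F → ℝ≥0) :
    Option E × Option F → ℝ≥0
  | (some a, none) => PL a
  | (none, some b) => PM b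
  | (some a, some b) => Peq a b
  | (none, none) => 0

/-- Cost of an alignment: sum of the costs of its moves. -/
def alignCost (PL : E → ℝ≥0) (PM : F → ℝ≥0) (Peq : E → F → ℝ≥0)
    (γ : List (Option E × Option F)) : ℝ≥0 :=
  (γ.map (moveCost PL PM Peq)).sum

lemma alignCost_append (PL : E → ℝ≥0) (PM : F → ℝ≥0) (Peq : E → F → ℝ≥0)
    (γ₁ γ₂ : List (Option E × Option F)) :
    alignCost PL PM Peq (γ₁ ++ γ₂) = alignCost PL PM Peq γ₁ + alignCost PL PM Peq γ₂ := by
  simp [alignCost]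

lemma logProj_append (γ₁ γ₂ : List (Option E × Option F)) :
    logProj (γ₁ ++ γ₂) = logProj γ₁ ++ logProj γ₂ := by simp [logProj]

lemma modelProj_append (γ₁ γ₂ : List (Option E × Option F)) :
    modelProj (γ₁ ++ γ₂) = modelProj γ₁ ++ modelProj γ₂ := by simp [modelProj]

lemma take_succ_eq {α} (l : List α) {i : ℕ} (h : i < l.length) :
    l.take (i+1) = l.take i ++ [l[i]] := by
  rw [List.take_succ, List.getElem?_eq_getElem h]; rfl

lemma sublist_concat_concat {α} {l₁ l₂ : List α} {a b : α}
    (h : (l₁ ++ [a]).Sublist (l₂ ++ [b])) :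
    (l₁ ++ [a]).Sublist l₂ ∨ (a = b ∧ l₁.Sublist l₂) := by
  replace h := h.reverse
  simp only [List.reverse_append, List.reverse_singleton, List.singleton_append] at h
  cases h with
  | cons _ h => left; simpa using h.reverse
  | cons_cons _ h => right; exact ⟨rfl, by simpa using h.reverse⟩

lemma min4_choice (a b c d : ℝ≥0) :
    min a (min b (min c d)) = a ∨ min a (min b (min c d)) = b ∨
    min a (min b (min c d)) = c ∨ min a (min b (min c d)) = d := by
  rcases min_choice a (min b (min c d)) with h | h
  · exact Or.inl h
  · rw [h]
    rcases min_choice b (min c d) with h' | h'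
    · exact Or.inr (Or.inl h')
    · rw [h']
      rcases min_choice c d with h'' | h''
      · exact Or.inr (Or.inr (Or.inl h''))
      · exact Or.inr (Or.inr (Or.inr h''))

section Main

variable (PL : E → ℝ≥0) (PM : F → ℝ≥0) (Peq : E → F → ℝ≥0)
    (e : List E) (f : List F) (δ₀ : ℕ → ℕ → ℝ≥0)

lemma delta_i0
    (h00 : δ₀ 0 0 = 0)
    (hi0 : ∀ i (hi : i < e.length),
      δ₀ (i + 1) 0 = min (PL (e[i]'hi) + δ₀ i 0) (δ₀ i 0)) :
    ∀ i, i ≤ e.length → δ₀ i 0 = 0 := by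
  intro i
  induction i with
  | zero => exact fun _ => h00
  | succ i ih =>
    intro h
    rw [hi0 i (by omega), min_eq_right le_add_self, ih (by omega)]

lemma exists_part
    (h00 : δ₀ 0 0 = 0)
    (hi0 : ∀ i (hi : i < e.length),
      δ₀ (i + 1) 0 = min (PL (e[i]'hi) + δ₀ i 0) (δ₀ i 0))
    (h0j : ∀ j (hj : j < f.length), δ₀ 0 (j + 1) = PM (f[j]'hj) + δ₀ 0 j)
    (hij : ∀ i j (hi : i < e.length) (hj : j < f.length),
      δ₀ (i + 1) (j + 1) =
        min (Peq (e[i]'hi) (f[j]'hj) + δ₀ i j)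
          (min (PL (e[i]'hi) + δ₀ i (j + 1))
            (min (δ₀ i (j + 1)) (PM (f[j]'hj) + δ₀ (i + 1) j)))) :
    ∀ i j, i ≤ e.length → j ≤ f.length →
      ∃ (e' : List E) (γ : List (Option E × Option F)),
        e'.Sublist (e.take i) ∧ IsAlignment e' (f.take j) γ ∧
          alignCost PL PM Peq γ = δ₀ i j := by
  intro i
  induction i with
  | zero =>
    intro j
    induction j with
    | zero =>
      exact fun _ _ => ⟨[], [], by simp, ⟨by simp, rfl, rfl⟩, by simp [alignCost, h00]⟩
    | succ j ihj =>
      intro _ hj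
      obtain ⟨e', γ, hs, ⟨hne, hl, hm⟩, hc⟩ := ihj (by omega) (by omega)
      have hjl : j < f.length := by omega
      refine ⟨e', γ ++ [(none, some f[j])], hs, ⟨?_, ?_, ?_⟩, ?_⟩
      · intro mv hmv
        rcases List.mem_append.mp hmv with h | h
        · exact hne mv h
        · simp at h; simp [h]
      · rw [logProj_append]; simpa [logProj] using hl
      · rw [modelProj_append, take_succ_eq f hjl, hm]; rfl
      · rw [alignCost_append, hc, h0j j hjl, add_comm]
        simp [alignCost, moveCost]
  | succ i ihi =>
    intro j
    induction j with
    | zero =>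
      intro hi _
      refine ⟨[], [], by simp, ⟨by simp, rfl, rfl⟩, ?_⟩
      rw [delta_i0 PL e δ₀ h00 hi0 (i+1) hi]
      simp [alignCost]
    | succ j ihj =>
      intro hi hj
      have hil : i < e.length := by omega
      have hjl : j < f.length := by omega
      have hte : e.take (i+1) = e.take i ++ [e[i]] := take_succ_eq e hil
      have htf : f.take (j+1) = f.take j ++ [f[j]] := take_succ_eq f hjl
      rcases min4_choice (Peq (e[i]'hil) (f[j]'hjl) + δ₀ i j)
        (PL (e[i]'hil) + δ₀ i (j + 1)) (δ₀ i (j + 1))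
        (PM (f[j]'hjl) + δ₀ (i + 1) j) with h | h | h | h <;>
        rw [← hij i j hil hjl] at h
      · -- synchronous move
        obtain ⟨e', γ, hs, ⟨hne, hl, hm⟩, hc⟩ := ihi j (by omega) (by omega)
        refine ⟨e' ++ [e[i]], γ ++ [(some e[i], some f[j])], ?_, ⟨?_, ?_, ?_⟩, ?_⟩
        · rw [hte]; exact hs.append (List.Sublist.refl _)
        · intro mv hmv
          rcases List.mem_append.mp hmv with h' | h'
          · exact hne mv h'
          · simp at h'; simp [h']
        · rw [logProj_append, hl]; rfl
        · rw [modelProj_append, hm, htf]; rfl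
        · rw [alignCost_append, hc, h]
          simp [alignCost, moveCost, add_comm]
      · -- log move
        obtain ⟨e', γ, hs, ⟨hne, hl, hm⟩, hc⟩ := ihi (j+1) (by omega) (by omega)
        refine ⟨e' ++ [e[i]], γ ++ [(some e[i], none)], ?_, ⟨?_, ?_, ?_⟩, ?_⟩
        · rw [hte]; exact hs.append (List.Sublist.refl _)
        · intro mv hmv
          rcases List.mem_append.mp hmv with h' | h'
          · exact hne mv h'
          · simp at h'; simp [h']
        · rw [logProj_append, hl]; rfl
        · rw [modelProj_append, hm]; simp [modelProj]
        · rw [alignCost_append, hc, h]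
          simp [alignCost, moveCost, add_comm]
      · -- drop e[i]
        obtain ⟨e', γ, hs, hal, hc⟩ := ihi (j+1) (by omega) (by omega)
        refine ⟨e', γ, ?_, hal, by rw [hc, h]⟩
        exact hs.trans (by rw [hte]; exact List.sublist_append_left _ _)
      · -- model move
        obtain ⟨e', γ, hs, ⟨hne, hl, hm⟩, hc⟩ := ihj (by omega) (by omega)
        refine ⟨e', γ ++ [(none, some f[j])], hs, ⟨?_, ?_, ?_⟩, ?_⟩
        · intro mv hmv
          rcases List.mem_append.mp hmv with h' | h'
          · exact hne mv h'
          · simp at h'; simp [h']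
        · rw [logProj_append, hl]; simp [logProj]
        · rw [modelProj_append, hm, htf]; rfl
        · rw [alignCost_append, hc, h]
          simp [alignCost, moveCost, add_comm]

lemma lb_part
    (h00 : δ₀ 0 0 = 0)
    (hi0 : ∀ i (hi : i < e.length),
      δ₀ (i + 1) 0 = min (PL (e[i]'hi) + δ₀ i 0) (δ₀ i 0))
    (h0j : ∀ j (hj : j < f.length), δ₀ 0 (j + 1) = PM (f[j]'hj) + δ₀ 0 j)
    (hij : ∀ i j (hi : i < e.length) (hj : j < f.length),
      δ₀ (i + 1) (j + 1) =
        min (Peq (e[i]'hi) (f[j]'hj) + δ₀ i j)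
          (min (PL (e[i]'hi) + δ₀ i (j + 1))
            (min (δ₀ i (j + 1)) (PM (f[j]'hj) + δ₀ (i + 1) j)))) :
    ∀ (N : ℕ) (γ : List (Option E × Option F)) (i j : ℕ),
      i + γ.length ≤ N → i ≤ e.length → j ≤ f.length →
      ∀ e' : List E, e'.Sublist (e.take i) → IsAlignment e' (f.take j) γ →
        δ₀ i j ≤ alignCost PL PM Peq γ := by
  intro N
  induction N with
  | zero =>
    intro γ i j hN hi hj e' hs ⟨hne, hl, hm⟩
    have hγ : γ = [] := by
      cases γ with
      | nil => rfl
      | cons a l => simp at hN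
    have hi0' : i = 0 := by omega
    subst hγ
    have hj0 : j = 0 := by
      have : (f.take j).length = 0 := by rw [← hm]; rfl
      rw [List.length_take] at this; omega
    subst hi0'; subst hj0
    rw [h00]; exact zero_le
  | succ N ih =>
    intro γ i j hN hi hj e' hs ⟨hne, hl, hm⟩
    rcases Nat.eq_zero_or_eq_succ_pred j with hj0 | hjs
    · subst hj0
      rw [delta_i0 PL e δ₀ h00 hi0 i hi]
      exact zero_le
    · set j' := j - 1 with hj'
      have hjeq : j = j' + 1 := hjs
      have hjl : j' < f.length := by omega
      have htf : f.take (j'+1) = f.take j' ++ [f[j']] := take_succ_eq f hjl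
      -- γ is nonempty since modelProj γ = f.take j ≠ [] or last move exists anyway
      rcases List.eq_nil_or_concat γ with hγ | ⟨γ', mv, hγ⟩
      all_goals (try rw [List.concat_eq_append] at hγ)
      · exfalso
        subst hγ
        have : (f.take j).length = 0 := by rw [← hm]; rfl
        rw [List.length_take] at this; omega
      · subst hγ
        obtain ⟨oa, ob⟩ := mv
        have hlenN : i + γ'.length ≤ N := by
          simp at hN; omega
        rw [alignCost_append]
        have hmvne : (oa, ob) ≠ ((none : Option E), (none : Option F)) :=
          hne _ (List.mem_append.mpr (Or.inr (by simp)))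
        cases oa with
        | none =>
          cases ob with
          | none => exact absurd rfl hmvne
          | some b =>
            -- model move
            have hm' : modelProj γ' ++ [b] = f.take j' ++ [f[j']] := by
              rw [← htf, ← hjeq, ← hm, modelProj_append]; rfl
            obtain ⟨hm'', hb⟩ := List.append_inj' hm' rfl
            have hb' : b = f[j'] := by simpa using hb
            have hl' : logProj γ' = e' := by
              rw [← hl, logProj_append]; simp [logProj]
            have hne' : ∀ mv ∈ γ', mv ≠ ((none : Option E), (none : Option F)) :=
              fun mv h => hne mv (List.mem_append.mpr (Or.inl h))
            have hrec : δ₀ i j' ≤ alignCost PL PM Peq γ' :=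
              ih γ' i j' (by omega) hi (by omega) e' hs ⟨hne', hl', hm''⟩
            have hcost : moveCost PL PM Peq (none, some b) = PM b := rfl
            simp only [alignCost, List.map_cons, List.map_nil, List.sum_cons,
              List.sum_nil, add_zero]
            rw [hjeq]
            cases i with
            | zero =>
              rw [h0j j' hjl]
              calc PM (f[j']'hjl) + δ₀ 0 j' ≤ PM (f[j']'hjl) + alignCost PL PM Peq γ' := by
                    exact add_le_add_right hrec _
                _ = alignCost PL PM Peq γ' + moveCost PL PM Peq (none, some b) := by
                    rw [hcost, hb', add_comm]
            | succ i' =>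
              have hil : i' < e.length := by omega
              calc δ₀ (i'+1) (j'+1)
                  ≤ PM (f[j']'hjl) + δ₀ (i'+1) j' := by
                    rw [hij i' j' hil hjl]
                    exact le_trans (min_le_right _ _)
                      (le_trans (min_le_right _ _) (min_le_right _ _))
                _ ≤ PM (f[j']'hjl) + alignCost PL PM Peq γ' := add_le_add_right hrec _
                _ = alignCost PL PM Peq γ' + moveCost PL PM Peq (none, some b) := by
                    rw [hcost, hb', add_comm]
        | some a =>
          -- e' ends with a
          have hl' : logProj γ' ++ [a] = e' := by
            cases ob <;> (rw [← hl, logProj_append]; rfl)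
          -- i cannot be 0
          cases i with
          | zero =>
            exfalso
            simp at hs
            rw [hs] at hl'
            exact List.cons_ne_nil _ _ (List.append_eq_nil_iff.mp hl').2
          | succ i' =>
            have hil : i' < e.length := by omega
            have hte : e.take (i'+1) = e.take i' ++ [e[i']] := take_succ_eq e hil
            rw [← hl', hte] at hs
            rcases sublist_concat_concat hs with hdrop | ⟨ha, hs'⟩
            · -- e' is a sublist of take i': drop
              have hrec : δ₀ i' (j'+1) ≤ alignCost PL PM Peq (γ' ++ [(some a, ob)]) := by
                refine ih (γ' ++ [(some a, ob)]) i' (j'+1) (by simp; omega) (by omega)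
                  (by omega) (logProj γ' ++ [a]) hdrop ⟨hne, ?_, ?_⟩
                · rw [hl']; exact hl
                · rw [← hjeq]; exact hm
              rw [← alignCost_append, hjeq]
              refine le_trans ?_ hrec
              rw [hij i' j' hil hjl]
              exact le_trans (min_le_right _ _) (le_trans (min_le_right _ _) (min_le_left _ _))
            · -- a = e[i']
              have hne' : ∀ mv ∈ γ', mv ≠ ((none : Option E), (none : Option F)) :=
                fun mv h => hne mv (List.mem_append.mpr (Or.inl h))
              cases ob with
              | none =>
                -- log move; model proj unchanged
                have hm' : modelProj γ' = f.take j := by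
                  rw [← hm, modelProj_append]; simp [modelProj]
                have hrec : δ₀ i' j ≤ alignCost PL PM Peq γ' :=
                  ih γ' i' j (by omega) (by omega) hj (logProj γ') hs' ⟨hne', rfl, hm'⟩
                simp only [alignCost, List.map_cons, List.map_nil, List.sum_cons,
                  List.sum_nil, add_zero]
                rw [hjeq]
                calc δ₀ (i'+1) (j'+1)
                    ≤ PL (e[i']'hil) + δ₀ i' (j'+1) := by
                      rw [hij i' j' hil hjl]
                      exact le_trans (min_le_right _ _) (min_le_left _ _)
                  _ ≤ PL (e[i']'hil) + alignCost PL PM Peq γ' := by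
                      refine add_le_add_right ?_ _
                      rw [← hjeq]; exact hrec
                  _ = alignCost PL PM Peq γ' + moveCost PL PM Peq (some a, none) := by
                      rw [ha, add_comm]; rfl
              | some b =>
                -- synchronous move
                have hm' : modelProj γ' ++ [b] = f.take j' ++ [f[j']] := by
                  rw [← htf, ← hjeq, ← hm, modelProj_append]; rfl
                obtain ⟨hm'', hb⟩ := List.append_inj' hm' rfl
                have hb' : b = f[j'] := by simpa using hb
                have hrec : δ₀ i' j' ≤ alignCost PL PM Peq γ' :=
                  ih γ' i' j' (by omega) (by omega) (by omega) (logProj γ') hs'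
                    ⟨hne', rfl, hm''⟩
                simp only [alignCost, List.map_cons, List.map_nil, List.sum_cons,
                  List.sum_nil, add_zero]
                rw [hjeq]
                calc δ₀ (i'+1) (j'+1)
                    ≤ Peq (e[i']'hil) (f[j']'hjl) + δ₀ i' j' := by
                      rw [hij i' j' hil hjl]
                      exact min_le_left _ _
                  _ ≤ Peq (e[i']'hil) (f[j']'hjl) + alignCost PL PM Peq γ' :=
                      add_le_add_right hrec _
                  _ = alignCost PL PM Peq γ' + moveCost PL PM Peq (some a, some b) := by
                      rw [ha, hb', add_comm]; rfl

end Main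

/-- `δ₀ m n` (defined by the recurrence allowing events of `e` to be dropped at zero cost)
is the minimum, over all subsequences `e'` of `e` and all alignments `γ` of `e'` and `f`,
of the cost of `γ`; the minimum is attained, and no subsequence of `e` admits an alignment
with `f` of cost strictly smaller than `δ₀ m n`. -/
theorem delta0_min_cost_over_subsequences
    (PL : E → ℝ≥0) (PM : F → ℝ≥0) (Peq : E → F → ℝ≥0)
    (e : List E) (f : List F)
    (δ₀ : ℕ → ℕ → ℝ≥0)
    (h00 : δ₀ 0 0 = 0)
    (hi0 : ∀ i (hi : i < e.length),
      δ₀ (i + 1) 0 = min (PL (e[i]'hi) + δ₀ i 0) (δ₀ i 0))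
    (h0j : ∀ j (hj : j < f.length), δ₀ 0 (j + 1) = PM (f[j]'hj) + δ₀ 0 j)
    (hij : ∀ i j (hi : i < e.length) (hj : j < f.length),
      δ₀ (i + 1) (j + 1) =
        min (Peq (e[i]'hi) (f[j]'hj) + δ₀ i j)
          (min (PL (e[i]'hi) + δ₀ i (j + 1))
            (min (δ₀ i (j + 1)) (PM (f[j]'hj) + δ₀ (i + 1) j)))) :
    (∃ (e' : List E) (γ : List (Option E × Option F)),
      e'.Sublist e ∧ IsAlignment e' f γ ∧
        alignCost PL PM Peq γ = δ₀ e.length f.length) ∧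
    (∀ (e' : List E) (γ : List (Option E × Option F)),
      e'.Sublist e → IsAlignment e' f γ →
        δ₀ e.length f.length ≤ alignCost PL PM Peq γ) := by
  constructor
  · obtain ⟨e', γ, hs, hal, hc⟩ :=
      exists_part PL PM Peq e f δ₀ h00 hi0 h0j hij e.length f.length le_rfl le_rfl
    rw [List.take_length] at hs
    rw [List.take_length] at hal
    exact ⟨e', γ, hs, hal, hc⟩
  · intro e' γ hs hal
    exact lb_part PL PM Peq e f δ₀ h00 hi0 h0j hij (e.length + γ.length) γ
      e.length f.length le_rfl le_rfl le_rfl e'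
      (by rw [List.take_length]; exact hs) (by rw [List.take_length]; exact hal)

end Stmt2
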